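/- Hook length formula for forests: let (F, ≤) be a finite forest (a poset in which the set of elements above any given element is a chain, i.e., if a ≤ b and a ≤ c then b ≤ c or c ≤ b), and let c(x) = |{y ∈ F : y ≤ x}|. Then the quotient h_F = [|F|]! / ∏_{x∈F} [c(x)] is a polynomial in δ (an element of ℤ[δ]). -/

import Mathlib

open Polynomial

/-- The quantum numbers `[n] ∈ ℤ[δ]`, with `δ = X`. -/
noncomputable def qnumP : ℕ → Polynomial ℤ
  | 0 => 0
  | 1 => 1
  | n + 2 => X * qnumP (n + 1) - qnumP n

/-- The quantum factorial `[n]! = [1][2]⋯[n]` in `ℤ[δ]`. -/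
noncomputable def qfactP (n : ℕ) : Polynomial ℤ :=
  ∏ i ∈ Finset.range n, qnumP (i + 1)

lemma qfactP_succ (n : ℕ) : qfactP (n + 1) = qfactP n * qnumP (n + 1) :=
  Finset.prod_range_succ _ _

/-- The addition formula `[a+1+b] = [a+1][b+1] - [a][b]`. -/
lemma qnum_add (a b : ℕ) :
    qnumP (a + 1 + b) = qnumP (a + 1) * qnumP (b + 1) - qnumP a * qnumP b := by
  induction a using Nat.twoStepInduction with
  | zero => simp [qnumP, Nat.add_comm]
  | one =>
    have : 1 + 1 + b = b + 2 := by omega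
    rw [this]
    show qnumP (b + 2) = qnumP 2 * qnumP (b + 1) - qnumP 1 * qnumP b
    simp only [qnumP]
    ring
  | more a ih1 ih2 =>
    have e1 : a + 2 + 1 + b = (a + 1 + b) + 2 := by omega
    have e2 : a + 1 + 1 + b = (a + b) + 2 := by omega
    have e2' : a + 1 + b = (a + b) + 1 := by omega
    rw [e1, show ((a + 1 + b) + 2 : ℕ) = (a + 1 + b) + 2 from rfl]
    have hdef : qnumP ((a + 1 + b) + 2) = X * qnumP (a + 1 + b + 1) - qnumP (a + 1 + b) := rfl
    have hdef2 : qnumP (a + 3) = X * qnumP (a + 2) - qnumP (a + 1) := rfl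
    have hdef3 : qnumP (a + 2) = X * qnumP (a + 1) - qnumP a := rfl
    have ih2' : qnumP (a + 1 + b + 1) = qnumP (a + 2) * qnumP (b + 1) - qnumP (a + 1) * qnumP b := by
      have : a + 1 + b + 1 = a + 1 + 1 + b := by omega
      rw [this]; exact ih2
    rw [hdef, ih2', ih1, show (a + 2 + 1 : ℕ) = a + 3 from rfl, hdef2, hdef3]
    ring

/-- The balanced Gaussian binomial in `ℤ[δ]`. -/
noncomputable def qbin : ℕ → ℕ → Polynomial ℤ
  | 0, _ => 1
  | _ + 1, 0 => 1
  | a + 1, b + 1 => qnumP (b + 2) * qbin a (b + 1) - qnumP a * qbin (a + 1) b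
termination_by a b => (a, b)

lemma qfact_mul_qbin : ∀ a b : ℕ, qfactP a * qfactP b * qbin a b = qfactP (a + b)
  | 0, b => by simp [qbin, qfactP]
  | a + 1, 0 => by simp [qbin, qfactP]
  | a + 1, b + 1 => by
    have h1 := qfact_mul_qbin a (b + 1)
    have h2 := qfact_mul_qbin (a + 1) b
    have h3 := qnum_add a (b + 1)
    have hb : qbin (a + 1) (b + 1)
        = qnumP (b + 2) * qbin a (b + 1) - qnumP a * qbin (a + 1) b := by
      rw [qbin]
    rw [hb, show (a + 1 + (b + 1) : ℕ) = (a + 1 + b) + 1 from rfl, qfactP_succ (a + 1 + b),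
      qfactP_succ a, qfactP_succ b]
    have e : a + 1 + b = a + (b + 1) := by omega
    rw [show (a + 1 + b + 1 : ℕ) = a + 1 + (b + 1) from rfl, h3]
    calc qfactP a * qnumP (a + 1) * (qfactP b * qnumP (b + 1)) *
          (qnumP (b + 2) * qbin a (b + 1) - qnumP a * qbin (a + 1) b)
        = qnumP (a + 1) * qnumP (b + 2) * (qfactP a * qfactP (b + 1) * qbin a (b + 1))
          - qnumP a * qnumP (b + 1) * (qfactP (a + 1) * qfactP b * qbin (a + 1) b) := by
          rw [qfactP_succ a, qfactP_succ b]; ring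
      _ = qnumP (a + 1) * qnumP (b + 2) * qfactP (a + (b + 1))
          - qnumP a * qnumP (b + 1) * qfactP (a + 1 + b) := by rw [h1, h2]
      _ = qfactP (a + 1 + b) * (qnumP (a + 1) * qnumP (b + 1 + 1) - qnumP a * qnumP (b + 1)) := by
          rw [e]; ring
termination_by a b => (a, b)

lemma qfact_mul_dvd (a b : ℕ) : qfactP a * qfactP b ∣ qfactP (a + b) :=
  Dvd.intro_left _ (by rw [mul_comm (qbin a b), qfact_mul_qbin])

lemma card_le_subtype {α : Type*} [PartialOrder α] (p : α → Prop) (x : α) (hpx : p x)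
    (h : ∀ y, y ≤ x → p y) :
    Nat.card {y : {z : α // p z} // y ≤ ⟨x, hpx⟩} = Nat.card {y : α // y ≤ x} :=
  Nat.card_congr ⟨fun y => ⟨y.1.1, y.2⟩, fun y => ⟨⟨y.1, h y.1 y.2⟩, y.2⟩,
    fun _ => rfl, fun _ => rfl⟩

lemma keyAux : ∀ (n : ℕ) (α : Type u) [Fintype α] [PartialOrder α],
    (∀ a b c : α, a ≤ b → a ≤ c → b ≤ c ∨ c ≤ b) → Fintype.card α = n →
    (∏ x : α, qnumP (Nat.card {y : α // y ≤ x})) ∣ qfactP n := by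
  intro n
  induction n using Nat.strong_induction_on with
  | _ n ih =>
    intro α _ _ hforest hcard
    classical
    rcases Nat.eq_zero_or_pos n with hn0 | hnpos
    · subst hn0
      have : IsEmpty α := Fintype.card_eq_zero_iff.mp hcard
      simp [qfactP]
    · haveI : Nonempty α := Fintype.card_pos_iff.mp (hcard ▸ hnpos)
      obtain ⟨r, -, hrmax⟩ : ∃ m ∈ (Finset.univ : Finset α), ∀ x ∈ (Finset.univ : Finset α), ¬ m < x := by
        obtain ⟨m, hm⟩ := Finset.exists_maximal (Finset.univ_nonempty (α := α))
        exact ⟨m, Finset.mem_univ m, fun x hx hlt => hlt.not_ge (hm.2 hx hlt.le)⟩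
      have hrmax' : ∀ x : α, r ≤ x → x = r := fun x hx =>
        le_antisymm (by
          by_contra h
          exact hrmax x (Finset.mem_univ x) (lt_of_le_of_ne hx (fun he => h (he ▸ le_refl r)))) hx
      by_cases hall : ∀ x : α, x ≤ r
      · -- α is a tree with top r; remove r
        obtain ⟨m, rfl⟩ := Nat.exists_eq_succ_of_ne_zero (Nat.pos_iff_ne_zero.mp hnpos)
        have hcr : Nat.card {y : α // y ≤ r} = m + 1 := by
          rw [Nat.card_congr (Equiv.subtypeUnivEquiv hall), Nat.card_eq_fintype_card, hcard]
        set f : α → Polynomial ℤ := fun x => qnumP (Nat.card {y : α // y ≤ x}) with hf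
        have hsplit : ∏ x : α, f x = f r * ∏ x ∈ Finset.univ.erase r, f x :=
          (Finset.mul_prod_erase Finset.univ f (Finset.mem_univ r)).symm
        have hcardβ : Fintype.card {x : α // x ≠ r} = m := by
          have h2 : Fintype.card {x : α // ¬ x = r}
              = Fintype.card α - Fintype.card {x : α // x = r} :=
            Fintype.card_subtype_compl _
          rw [Fintype.card_subtype_eq] at h2
          have h3 : Fintype.card {x : α // x ≠ r} = Fintype.card {x : α // ¬ x = r} := rfl
          omega
        have hclos : ∀ x : {x : α // x ≠ r}, ∀ y : α, y ≤ x.1 → y ≠ r := by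
          rintro ⟨x, hx⟩ y hy rfl
          exact hx (hrmax' x hy)
        have hprod2 : ∏ x ∈ Finset.univ.erase r, f x
            = ∏ x : {x : α // x ≠ r}, qnumP (Nat.card {y : {z : α // z ≠ r} // y ≤ x}) := by
          rw [Finset.prod_subtype (Finset.univ.erase r)
            (p := fun x : α => x ≠ r) (by simp) f]
          refine Finset.prod_congr rfl ?_
          rintro ⟨x, hx⟩ -
          exact congrArg qnumP (card_le_subtype (fun z : α => z ≠ r) x hx (hclos ⟨x, hx⟩)).symm
        have hIH := ih m (Nat.lt_succ_self m) {x : α // x ≠ r}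
          (fun a b c hab hac => hforest a.1 b.1 c.1 hab hac) hcardβ
        rw [hsplit, hprod2]
        show qnumP (Nat.card {y : α // y ≤ r}) * _ ∣ _
        rw [hcr, qfactP_succ, mul_comm (qfactP m)]
        exact mul_dvd_mul dvd_rfl hIH
      · -- split into the down-set of r and its complement
        push_neg at hall
        obtain ⟨w, hw⟩ := hall
        set p : α → Prop := fun x => x ≤ r with hp
        have hn1 : 0 < Fintype.card {x : α // p x} :=
          Fintype.card_pos_iff.mpr ⟨⟨r, le_refl r⟩⟩
        have hn2 : 0 < Fintype.card {x : α // ¬ p x} :=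
          Fintype.card_pos_iff.mpr ⟨⟨w, hw⟩⟩
        have hsum : Fintype.card {x : α // p x} + Fintype.card {x : α // ¬ p x} = n := by
          have hle : Fintype.card {x : α // p x} ≤ Fintype.card α := Fintype.card_subtype_le _
          have hcompl : Fintype.card {x : α // ¬ p x}
              = Fintype.card α - Fintype.card {x : α // p x} := Fintype.card_subtype_compl _
          omega
        have hlt1 : Fintype.card {x : α // p x} < n := by omega
        have hlt2 : Fintype.card {x : α // ¬ p x} < n := by omega
        have hclos1 : ∀ x : α, p x → ∀ y : α, y ≤ x → p y :=
          fun x hx y hy => le_trans hy hx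
        have hclos2 : ∀ x : α, ¬ p x → ∀ y : α, y ≤ x → ¬ p y := by
          intro x hx y hy hyr
          rcases hforest y x r hy hyr with h | h
          · exact hx h
          · exact hx ((hrmax' x h) ▸ le_refl r)
        set f : α → Polynomial ℤ := fun x => qnumP (Nat.card {y : α // y ≤ x}) with hf
        have hsplit := Fintype.prod_subtype_mul_prod_subtype p f
        have hprod1 : ∏ x : {x : α // p x}, f x.1
            = ∏ x : {x : α // p x}, qnumP (Nat.card {y : {z : α // p z} // y ≤ x}) := by
          refine Finset.prod_congr rfl ?_
          rintro ⟨x, hx⟩ -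
          exact congrArg qnumP (card_le_subtype p x hx (hclos1 x hx)).symm
        have hprod2 : ∏ x : {x : α // ¬ p x}, f x.1
            = ∏ x : {x : α // ¬ p x}, qnumP (Nat.card {y : {z : α // ¬ p z} // y ≤ x}) := by
          refine Finset.prod_congr rfl ?_
          rintro ⟨x, hx⟩ -
          exact congrArg qnumP (card_le_subtype (fun z => ¬ p z) x hx (hclos2 x hx)).symm
        have hIH1 := ih _ hlt1 {x : α // p x}
          (fun a b c hab hac => hforest a.1 b.1 c.1 hab hac) rfl
        have hIH2 := ih _ hlt2 {x : α // ¬ p x}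
          (fun a b c hab hac => hforest a.1 b.1 c.1 hab hac) rfl
        calc (∏ x : α, f x)
            = (∏ x : {x : α // p x}, qnumP (Nat.card {y : {z : α // p z} // y ≤ x}))
              * ∏ x : {x : α // ¬ p x}, qnumP (Nat.card {y : {z : α // ¬ p z} // y ≤ x}) := by
              rw [← hprod1, ← hprod2, hsplit]
          _ ∣ qfactP (Fintype.card {x : α // p x}) * qfactP (Fintype.card {x : α // ¬ p x}) :=
              mul_dvd_mul hIH1 hIH2
          _ ∣ qfactP n := hsum ▸ qfact_mul_dvd _ _

/-- Hook length formula for forests: for a finite forest poset `F` (above-sets are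
chains) with `c(x) = |{y : y ≤ x}|`, the product `∏_x [c(x)]` divides `[|F|]!` in
`ℤ[δ]`, i.e. `h_F = [|F|]!/∏_x [c(x)]` is a polynomial in `δ`. -/
theorem stmt16 {α : Type*} [Fintype α] [PartialOrder α]
    (hforest : ∀ a b c : α, a ≤ b → a ≤ c → b ≤ c ∨ c ≤ b) :
    (∏ x : α, qnumP (Nat.card {y : α // y ≤ x})) ∣ qfactP (Fintype.card α) :=
  keyAux (Fintype.card α) α hforest rfl
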